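/- arXiv:2106.12725 — 2 statements merged into one kernel-verified Lean document; each statement's English description precedes it below -/
import Mathlib

section
/- Let j ∈ R⁻, s = L-head(j) and H = L-root(j). Define δ(j) = |{j′ ∈ [1..n] : LCE(j,j′) ≥ 3τ−1 and T[j′..n] ⪯ T[j..n]}|, δᵃ(j) = |{j′ ∈ R⁻_{s,H} : L-exp(j′) ≤ L-exp(j)}|, and δˢ(j) = |{j′ ∈ R⁻_{s,H} : L-exp(j′) = L-exp(j) and T[j′..n] ≻ T[j..n]}|. Then δ(j) = δᵃ(j) − δˢ(j). -/
open scoped Classical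

namespace CSA

/-- Character of a 1-indexed string at position `i` (junk value 0 out of range). -/
def idx (S : List ℕ) (i : ℕ) : ℕ := S.getD (i - 1) 0

/-- Substring `S[i..j)` in the 1-indexed, half-open convention. -/
def sub (S : List ℕ) (i j : ℕ) : List ℕ := (S.drop (i - 1)).take (j - i)

/-- Suffix `S[i..|S|]` (1-indexed). -/
def suf (S : List ℕ) (i : ℕ) : List ℕ := S.drop (i - 1)

/-- Length of the longest common prefix of two strings. -/
def lcp (A B : List ℕ) : ℕ := ((A.zip B).takeWhile fun p => p.1 == p.2).length

/-- `LCE T j₁ j₂` is the length of the longest common prefix of `T[j₁..n]` and `T[j₂..n]`. -/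
def LCE (T : List ℕ) (j₁ j₂ : ℕ) : ℕ := lcp (suf T j₁) (suf T j₂)

/-- `p` is a period of `S`. -/
def IsPeriod (S : List ℕ) (p : ℕ) : Prop :=
  1 ≤ p ∧ p ≤ S.length ∧ ∀ i, i + p < S.length → S.getD i 0 = S.getD (i + p) 0

/-- The shortest period of `S`. -/
noncomputable def per (S : List ℕ) : ℕ := sInf {p | IsPeriod S p}

/-- `R = {i ∈ [1..n−3τ+2] : per(T[i..i+3τ−1)) ≤ τ/3}`. -/
noncomputable def R (T : List ℕ) (τ : ℕ) : Set ℕ :=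
  {i | 1 ≤ i ∧ i + 3 * τ ≤ T.length + 2 ∧ 3 * per (sub T i (i + 3 * τ - 1)) ≤ τ}

/-- `rend(j) = min{j′ ≥ j : j′ ∉ R} + 3τ − 2`. -/
noncomputable def rend (T : List ℕ) (τ j : ℕ) : ℕ :=
  sInf {j' | j ≤ j' ∧ j' ∉ R T τ} + 3 * τ - 2

/-- `L-root(j)`: lexicographically smallest among `{T[j+t..j+t+p) : 0 ≤ t < p}`
where `p = per(T[j..j+3τ−1))`. -/
noncomputable def Lroot (T : List ℕ) (τ j : ℕ) : List ℕ :=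
  WithTop.untopD [] ((Finset.range (per (sub T j (j + 3 * τ - 1)))).image fun t =>
      sub T (j + t) (j + t + per (sub T j (j + 3 * τ - 1)))).min

/-- `L-head(j)`: the (unique) `s ∈ [0..p)` with `T[j+s..j+s+p) = L-root(j)`. -/
noncomputable def Lhead (T : List ℕ) (τ j : ℕ) : ℕ :=
  sInf {s | s < per (sub T j (j + 3 * τ - 1)) ∧
    sub T (j + s) (j + s + per (sub T j (j + 3 * τ - 1))) = Lroot T τ j}

noncomputable def Lexp (T : List ℕ) (τ j : ℕ) : ℕ :=
  (rend T τ j - j - Lhead T τ j) / per (sub T j (j + 3 * τ - 1))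

noncomputable def Ltail (T : List ℕ) (τ j : ℕ) : ℕ :=
  (rend T τ j - j - Lhead T τ j) % per (sub T j (j + 3 * τ - 1))

noncomputable def rendfull (T : List ℕ) (τ j : ℕ) : ℕ := rend T τ j - Ltail T τ j

/-- `type(j) = +1` if `rend(j) ≤ n` and `T[rend(j)] > T[rend(j)−p]`, and `−1` otherwise. -/
noncomputable def typ (T : List ℕ) (τ j : ℕ) : ℤ :=
  if rend T τ j ≤ T.length ∧
      idx T (rend T τ j - per (sub T j (j + 3 * τ - 1))) < idx T (rend T τ j)
    then 1 else -1

noncomputable def Rminus (T : List ℕ) (τ : ℕ) : Set ℕ := {j ∈ R T τ | typ T τ j = -1}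

noncomputable def RH (T : List ℕ) (τ : ℕ) (H : List ℕ) : Set ℕ :=
  {j ∈ R T τ | Lroot T τ j = H}

noncomputable def RsH (T : List ℕ) (τ s : ℕ) (H : List ℕ) : Set ℕ :=
  {j ∈ R T τ | Lroot T τ j = H ∧ Lhead T τ j = s}

noncomputable def RminusH (T : List ℕ) (τ : ℕ) (H : List ℕ) : Set ℕ :=
  Rminus T τ ∩ RH T τ H

noncomputable def RminusSH (T : List ℕ) (τ s : ℕ) (H : List ℕ) : Set ℕ :=
  Rminus T τ ∩ RsH T τ s H

noncomputable def Rprime (T : List ℕ) (τ : ℕ) : Set ℕ := {j ∈ R T τ | j - 1 ∉ R T τ}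

/-- `Occ(P,S)`: the set of (1-indexed) starting positions of occurrences of `P` in `S`. -/
def OccSet (P S : List ℕ) : Set ℕ :=
  {j | 1 ≤ j ∧ j + P.length ≤ S.length + 1 ∧ sub S j (j + P.length) = P}

noncomputable def RangeBeg (P T : List ℕ) : ℕ :=
  Set.ncard {i | 1 ≤ i ∧ i ≤ T.length ∧ suf T i < P}

noncomputable def RangeEnd (P T : List ℕ) : ℕ := RangeBeg P T + (OccSet P T).ncard

/-- `ISA[j]`: the lexicographic rank of the suffix `T[j..n]` among all suffixes of `T`. -/
noncomputable def ISA (T : List ℕ) (j : ℕ) : ℕ :=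
  Set.ncard {j' | 1 ≤ j' ∧ j' ≤ T.length ∧ suf T j' ≤ suf T j}

/-- `succ_S(i) = min{j ∈ S ∪ {n−2τ+2} : j ≥ i}`. -/
noncomputable def succS (T : List ℕ) (τ : ℕ) (Sync : Set ℕ) (i : ℕ) : ℕ :=
  sInf {j | i ≤ j ∧ (j ∈ Sync ∨ j = T.length + 2 - 2 * τ)}

/-- The set `D` of distinguishing prefixes. -/
noncomputable def Dset (T : List ℕ) (τ : ℕ) (Sync : Set ℕ) : Set (List ℕ) :=
  {X | ∃ i, 1 ≤ i ∧ i + 3 * τ ≤ T.length + 2 ∧ i ∉ R T τ ∧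
    X = sub T i (succS T τ Sync i + 2 * τ)}

/-- `T^∞[i] = T[1 + ((i−1) mod n)]` for `i : ℤ`. -/
def tinf (T : List ℕ) (i : ℤ) : ℕ := idx T (((i - 1).emod (T.length : ℤ)).toNat + 1)

/-- `W[i]`: the reverse of `T^∞[s^lex_i − τ .. s^lex_i + 2τ)`. -/
def Wstr (T : List ℕ) (τ : ℕ) (slex : ℕ → ℕ) (i : ℕ) : List ℕ :=
  ((List.range (3 * τ)).map fun k => tinf T ((slex i : ℤ) - (τ : ℤ) + (k : ℤ))).reverse

/- Pattern versions of the `L`-decomposition functions. -/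

noncomputable def perP (τ : ℕ) (P : List ℕ) : ℕ := per (P.take (3 * τ - 1))

/-- A pattern is periodic if `|P| ≥ 3τ−1` and `per(P[1..3τ−1]) ≤ τ/3`. -/
noncomputable def Periodic (τ : ℕ) (P : List ℕ) : Prop :=
  3 * τ - 1 ≤ P.length ∧ 3 * perP τ P ≤ τ

noncomputable def pend (τ : ℕ) (P : List ℕ) : ℕ :=
  1 + perP τ P + lcp P (P.drop (perP τ P))

noncomputable def LrootP (τ : ℕ) (P : List ℕ) : List ℕ :=
  WithTop.untopD [] ((Finset.range (perP τ P)).image fun t => (P.drop t).take (perP τ P)).min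

noncomputable def LheadP (τ : ℕ) (P : List ℕ) : ℕ :=
  sInf {s | s < perP τ P ∧ (P.drop s).take (perP τ P) = LrootP τ P}

noncomputable def LexpP (τ : ℕ) (P : List ℕ) : ℕ :=
  (pend τ P - 1 - LheadP τ P) / perP τ P

noncomputable def LtailP (τ : ℕ) (P : List ℕ) : ℕ :=
  (pend τ P - 1 - LheadP τ P) % perP τ P

noncomputable def pendfullP (τ : ℕ) (P : List ℕ) : ℕ := pend τ P - LtailP τ P

noncomputable def typP (τ : ℕ) (P : List ℕ) : ℤ :=
  if pend τ P ≤ P.length ∧ idx P (pend τ P - perP τ P) < idx P (pend τ P)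
    then 1 else -1

/-- `pow(H)`: the prefix of length `|H|·⌈τ/|H|⌉` of `H^∞`. -/
def powS (τ : ℕ) (H : List ℕ) : List ℕ :=
  (List.replicate ((τ + H.length - 1) / H.length) H).flatten

section Aux

/-- Chaining a period step `k` times. -/
lemma chain_per (f : ℕ → ℕ) (g lo hi : ℕ)
    (h : ∀ x, lo ≤ x → x + g ≤ hi → f x = f (x + g)) :
    ∀ k x, lo ≤ x → x + k * g ≤ hi → f x = f (x + k * g) := by
  intro k
  induction k with
  | zero => simp
  | succ k ih =>
    intro x hx hxk
    have e : (k+1)*g = k*g + g := Nat.succ_mul k g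
    have h1 : f x = f (x + g) := h x hx (by omega)
    have h2 : f (x + g) = f (x + g + k * g) := ih (x + g) (by omega) (by omega)
    have e2 : x + g + k * g = x + (k+1) * g := by omega
    rw [h1, h2, e2]

lemma chain_eq (f : ℕ → ℕ) (g lo hi : ℕ)
    (h : ∀ x, lo ≤ x → x + g ≤ hi → f x = f (x + g))
    (x y : ℕ) (hx : lo ≤ x) (hxy : x ≤ y) (hy : y ≤ hi)
    (hd : (y - x) % g = 0) : f x = f y := by
  have hdvd : g ∣ (y - x) := Nat.dvd_of_mod_eq_zero hd
  have e : ((y - x) / g) * g = y - x := Nat.div_mul_cancel hdvd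
  have e2 : x + ((y - x) / g) * g = y := by omega
  have := chain_per f g lo hi h ((y - x) / g) x hx (by omega)
  rwa [e2] at this

/-- Fine–Wilf (weak form) for functions. -/
lemma fw_step (p q : ℕ) (f : ℕ → ℕ) (L : ℕ) (hp1 : 1 ≤ p) (hlt : p < q) (hL : p + q ≤ L)
    (hp : ∀ i, i + p < L → f i = f (i + p)) (hq : ∀ i, i + q < L → f i = f (i + q)) :
    ∀ i, i + (q - p) < L → f i = f (i + (q - p)) := by
  intro i hi
  by_cases hc : i + q < L
  · have e1 : f (i + (q - p)) = f ((i + (q - p)) + p) := hp _ (by omega)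
    have e2 : f i = f (i + q) := hq i hc
    have e3 : (i + (q - p)) + p = i + q := by omega
    rw [e2, e1, e3]
  · have hip : p ≤ i := by omega
    have e1 : f (i - p) = f ((i - p) + p) := hp _ (by omega)
    have e2 : f (i - p) = f ((i - p) + q) := hq _ (by omega)
    have h3 : (i - p) + p = i := by omega
    have h4 : (i - p) + q = i + (q - p) := by omega
    rw [h3] at e1; rw [h4] at e2; rw [← e1, e2]

lemma fw : ∀ N p q (f : ℕ → ℕ) (L : ℕ), p + q ≤ N → 1 ≤ p → 1 ≤ q → p + q ≤ L →
    (∀ i, i + p < L → f i = f (i + p)) → (∀ i, i + q < L → f i = f (i + q)) →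
    ∀ i, i + Nat.gcd p q < L → f i = f (i + Nat.gcd p q) := by
  intro N
  induction N with
  | zero => intro p q f L hN hp1; omega
  | succ N ih =>
    intro p q f L hN hp1 hq1 hL hp hq
    rcases lt_trichotomy p q with hlt | heq | hgt
    · have hper := fw_step p q f L hp1 hlt hL hp hq
      have hg : Nat.gcd p (q - p) = Nat.gcd p q := Nat.gcd_sub_self_right (le_of_lt hlt)
      have := ih p (q - p) f L (by omega) hp1 (by omega) (by omega) hp hper
      rwa [hg] at this
    · subst heq
      rw [Nat.gcd_self]
      exact hp
    · have hper := fw_step q p f L hq1 hgt (by omega) hq hp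
      have hg : Nat.gcd q (p - q) = Nat.gcd q p := Nat.gcd_sub_self_right (le_of_lt hgt)
      have := ih q (p - q) f L (by omega) hq1 (by omega) (by omega) hq hper
      rw [hg, Nat.gcd_comm] at this
      exact this

/-- getD of a substring. -/
lemma sub_getD (T : List ℕ) (k L i : ℕ) (h1 : 1 ≤ k) (h2 : k + L ≤ T.length + 1)
    (hi : i < L) : (sub T k (k + L)).getD i 0 = idx T (k + i) := by
  unfold sub idx
  have e : k + L - k = L := by omega
  rw [e, List.getD_eq_getElem?_getD, List.getElem?_take, if_pos hi, List.getElem?_drop,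
    List.getD_eq_getElem?_getD]
  have e2 : k - 1 + i = k + i - 1 := by omega
  rw [e2]

lemma suf_len (T : List ℕ) (k : ℕ) (h1 : 1 ≤ k) (hk : k ≤ T.length + 1) :
    (suf T k).length = T.length + 1 - k := by
  unfold suf; rw [List.length_drop]; omega

lemma suf_getD (T : List ℕ) (k i : ℕ) (h1 : 1 ≤ k) :
    (suf T k).getD i 0 = idx T (k + i) := by
  unfold suf idx
  rw [List.getD_eq_getElem?_getD, List.getElem?_drop, List.getD_eq_getElem?_getD]
  have e2 : k - 1 + i = k + i - 1 := by omega
  rw [e2]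

/-- Pointwise strict inequality at `k` with equal prefix gives lex `<`. -/
lemma lex_lt_of_point : ∀ (k : ℕ) (A B : List ℕ), (∀ i, i < k → A.getD i 0 = B.getD i 0) →
    k < A.length → k < B.length → A.getD k 0 < B.getD k 0 → A < B := by
  intro k
  induction k with
  | zero =>
    intro A B _ hA hB hlt
    match A, B with
    | a :: A', b :: B' =>
      have : a < b := by simpa using hlt
      exact List.Lex.rel this
  | succ k ih =>
    intro A B hpre hA hB hlt
    match A, B with
    | a :: A', b :: B' =>
      have h0 : a = b := by simpa using hpre 0 (by omega)
      subst h0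
      refine List.Lex.cons ?_
      exact ih A' B' (fun i hi => by simpa using hpre (i+1) (by omega))
        (by simpa using hA) (by simpa using hB) (by simpa using hlt)

/-- A strict prefix (pointwise) gives lex `<`. -/
lemma lex_lt_of_prefix : ∀ (A B : List ℕ), A.length < B.length →
    (∀ i, i < A.length → A.getD i 0 = B.getD i 0) → A < B := by
  intro A
  induction A with
  | nil =>
    intro B hB _
    match B with
    | b :: B' => exact List.Lex.nil
  | cons a A' ih =>
    intro B hB hpre
    match B with
    | b :: B' =>
      have h0 : a = b := by simpa using hpre 0 (by simp)
      subst h0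
      refine List.Lex.cons ?_
      exact ih B' (by simpa using hB) (fun i hi => by simpa using hpre (i+1) (by simpa using hi))

lemma lcp_le_left (A B : List ℕ) : lcp A B ≤ A.length := by
  unfold lcp
  calc (List.takeWhile _ (A.zip B)).length ≤ (A.zip B).length :=
        (List.takeWhile_sublist _).length_le
    _ ≤ A.length := by rw [List.length_zip]; omega

lemma lcp_le_right (A B : List ℕ) : lcp A B ≤ B.length := by
  unfold lcp
  calc (List.takeWhile _ (A.zip B)).length ≤ (A.zip B).length :=
        (List.takeWhile_sublist _).length_le
    _ ≤ B.length := by rw [List.length_zip]; omega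

lemma le_lcp_iff : ∀ (L : ℕ) (A B : List ℕ), L ≤ A.length → L ≤ B.length →
    (L ≤ lcp A B ↔ ∀ i, i < L → A.getD i 0 = B.getD i 0) := by
  intro L
  induction L with
  | zero => intro A B _ _; simp
  | succ L ih =>
    intro A B hA hB
    match A, B with
    | a :: A', b :: B' =>
      by_cases hab : a = b
      · subst hab
        have hl : lcp (a :: A') (a :: B') = lcp A' B' + 1 := by
          unfold lcp
          simp [List.takeWhile_cons]
        rw [hl]
        constructor
        · intro h i hi
          match i with
          | 0 => simp
          | i + 1 =>
            have := ((ih A' B' (by simpa using hA) (by simpa using hB)).mp (by omega)) i (by omega)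
            simpa using this
        · intro h
          have : L ≤ lcp A' B' := (ih A' B' (by simpa using hA) (by simpa using hB)).mpr
            (fun i hi => by simpa using h (i+1) (by omega))
          omega
      · have hl : lcp (a :: A') (b :: B') = 0 := by
          unfold lcp
          simp [List.takeWhile_cons, hab]
        rw [hl]
        constructor
        · intro h; omega
        · intro h
          exact absurd (by simpa using h 0 (by omega)) hab

end Aux
section Aux2

/-- Minimal period of the window at `k`. -/
noncomputable def wper (T : List ℕ) (τ k : ℕ) : ℕ := per (sub T k (k + 3 * τ - 1))

lemma win_len (T : List ℕ) (τ k : ℕ) (hτ : 1 ≤ τ) (hk1 : 1 ≤ k)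
    (hk : k + 3 * τ ≤ T.length + 2) : (sub T k (k + 3 * τ - 1)).length = 3 * τ - 1 := by
  unfold sub
  rw [List.length_take, List.length_drop]
  omega

lemma win_eq (T : List ℕ) (τ k : ℕ) (hτ : 1 ≤ τ) :
    sub T k (k + 3 * τ - 1) = sub T k (k + (3 * τ - 1)) := by
  unfold sub
  congr 1
  omega

lemma win_getD (T : List ℕ) (τ k i : ℕ) (hτ : 1 ≤ τ) (hk1 : 1 ≤ k)
    (hk : k + 3 * τ ≤ T.length + 2) (hi : i < 3 * τ - 1) :
    (sub T k (k + 3 * τ - 1)).getD i 0 = idx T (k + i) := by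
  rw [win_eq T τ k hτ]
  exact sub_getD T k (3 * τ - 1) i hk1 (by omega) hi

lemma isPeriod_win_iff (T : List ℕ) (τ k q : ℕ) (hτ : 1 ≤ τ) (hk1 : 1 ≤ k)
    (hk : k + 3 * τ ≤ T.length + 2) :
    IsPeriod (sub T k (k + 3 * τ - 1)) q ↔
      (1 ≤ q ∧ q ≤ 3 * τ - 1 ∧ ∀ i, i + q < 3 * τ - 1 → idx T (k + i) = idx T (k + i + q)) := by
  unfold IsPeriod
  rw [win_len T τ k hτ hk1 hk]
  constructor
  · rintro ⟨h1, h2, h3⟩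
    refine ⟨h1, h2, fun i hi => ?_⟩
    have := h3 i hi
    rw [win_getD T τ k i hτ hk1 hk (by omega), win_getD T τ k (i+q) hτ hk1 hk (by omega)] at this
    rw [this]; congr 1; omega
  · rintro ⟨h1, h2, h3⟩
    refine ⟨h1, h2, fun i hi => ?_⟩
    rw [win_getD T τ k i hτ hk1 hk (by omega), win_getD T τ k (i+q) hτ hk1 hk (by omega)]
    have := h3 i hi
    rw [this]; congr 1; omega

lemma wper_isPeriod (T : List ℕ) (τ k : ℕ) (hτ : 1 ≤ τ) (hk1 : 1 ≤ k)
    (hk : k + 3 * τ ≤ T.length + 2) : IsPeriod (sub T k (k + 3 * τ - 1)) (wper T τ k) := by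
  have h := Nat.sInf_mem (s := {p | IsPeriod (sub T k (k + 3 * τ - 1)) p})
    ⟨3 * τ - 1, (isPeriod_win_iff T τ k _ hτ hk1 hk).mpr
      ⟨by omega, le_refl _, fun i hi => by omega⟩⟩
  exact h

lemma wper_le (T : List ℕ) (τ k q : ℕ) (h : IsPeriod (sub T k (k + 3 * τ - 1)) q) :
    wper T τ k ≤ q := Nat.sInf_le h

lemma mem_R_iff (T : List ℕ) (τ k : ℕ) :
    k ∈ R T τ ↔ 1 ≤ k ∧ k + 3 * τ ≤ T.length + 2 ∧ 3 * wper T τ k ≤ τ := Iff.rfl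

lemma wper_facts (T : List ℕ) (τ k : ℕ) (hτ : 1 ≤ τ) (hk : k ∈ R T τ) :
    1 ≤ wper T τ k ∧ 3 * wper T τ k ≤ τ ∧ wper T τ k ≤ 3 * τ - 1 := by
  obtain ⟨h1, h2, h3⟩ := hk
  have := (isPeriod_win_iff T τ k _ hτ h1 h2).mp (wper_isPeriod T τ k hτ h1 h2)
  exact ⟨this.1, h3, this.2.1⟩

/-- The window period statement in `idx` terms. -/
lemma wper_idx (T : List ℕ) (τ k : ℕ) (hτ : 1 ≤ τ) (hk : k ∈ R T τ) :
    ∀ i, i + wper T τ k < 3 * τ - 1 → idx T (k + i) = idx T (k + i + wper T τ k) := by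
  obtain ⟨h1, h2, _⟩ := hk
  exact ((isPeriod_win_iff T τ k _ hτ h1 h2).mp (wper_isPeriod T τ k hτ h1 h2)).2.2

lemma sub_shift (T : List ℕ) (τ k t L' : ℕ) (h1 : 1 ≤ k) (ht : t + L' ≤ 3 * τ - 1) :
    sub T (k + t) (k + t + L') = ((sub T k (k + 3 * τ - 1)).drop t).take L' := by
  unfold sub
  have e1 : k + t + L' - (k + t) = L' := by omega
  have e2 : k + 3 * τ - 1 - k = 3 * τ - 1 := by omega
  rw [e1, e2, List.drop_take, List.take_take, List.drop_drop]
  rw [min_eq_left (by omega : L' ≤ 3 * τ - 1 - t)]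
  have e4 : k + t - 1 = k - 1 + t := by omega
  rw [e4]

/-- `Lhead` is a valid witness: it is `< wper` and picks out `Lroot`. -/
lemma lroot_head (T : List ℕ) (τ k : ℕ) (hτ : 1 ≤ τ) (hk : k ∈ R T τ) :
    Lhead T τ k < wper T τ k ∧
      sub T (k + Lhead T τ k) (k + Lhead T τ k + wper T τ k) = Lroot T τ k := by
  have hp1 : 1 ≤ wper T τ k := (wper_facts T τ k hτ hk).1
  have hw : per (sub T k (k + 3 * τ - 1)) = wper T τ k := rfl
  set p := wper T τ k with hp
  have hne : ((Finset.range p).image fun t =>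
      sub T (k + t) (k + t + p)).Nonempty := by
    refine ⟨sub T (k + 0) (k + 0 + p), Finset.mem_image_of_mem _ ?_⟩
    simp [Finset.mem_range]; omega
  have hmin : Lroot T τ k = ((Finset.range p).image fun t =>
      sub T (k + t) (k + t + p)).min' hne := by
    unfold Lroot
    rw [hw, ← Finset.coe_min' hne, WithTop.untopD_coe]
  have hmem := Finset.min'_mem _ hne
  rw [← hmin] at hmem
  rw [Finset.mem_image] at hmem
  obtain ⟨t, ht, hteq⟩ := hmem
  rw [Finset.mem_range] at ht
  have hne2 : ({s | s < p ∧ sub T (k + s) (k + s + p) = Lroot T τ k} : Set ℕ).Nonempty :=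
    ⟨t, ht, hteq⟩
  have := Nat.sInf_mem hne2
  exact ⟨this.1, this.2⟩

lemma lroot_len (T : List ℕ) (τ k : ℕ) (hτ : 1 ≤ τ) (hk : k ∈ R T τ) :
    (Lroot T τ k).length = wper T τ k := by
  obtain ⟨hs, heq⟩ := lroot_head T τ k hτ hk
  obtain ⟨hp1, hp3, _⟩ := wper_facts T τ k hτ hk
  obtain ⟨hk1, hk2, _⟩ := hk
  rw [← heq]
  unfold sub
  rw [List.length_take, List.length_drop]
  omega

end Aux2
section Aux3

lemma mod_sub_zero (g a b : ℕ) (hg : 0 < g) (h : g ∣ a) (h2 : g ∣ b) : (a - b) % g = 0 :=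
  Nat.mod_eq_zero_of_dvd (Nat.dvd_sub h h2)

/-- Core of the period-constancy step, stated for an abstract character function. -/
lemma per_step_core (f : ℕ → ℕ) (τ p1 p2 : ℕ) (hτ3 : 3 ≤ τ)
    (hp1 : 1 ≤ p1) (hp3 : 3*p1 ≤ τ) (hq1 : 1 ≤ p2) (hq3 : 3*p2 ≤ τ)
    (w1 : ∀ i, i + p1 < 3*τ-1 → f i = f (i+p1))
    (w2 : ∀ i, i + p2 < 3*τ-1 → f (1+i) = f (1+i+p2)) :
    (∀ i, i + Nat.gcd p1 p2 < 3*τ-1 → f i = f (i + Nat.gcd p1 p2)) ∧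
    (∀ i, i + Nat.gcd p1 p2 < 3*τ-1 → f (1+i) = f (1+i + Nat.gcd p1 p2)) := by
  have hg1 : 1 ≤ Nat.gcd p1 p2 := Nat.gcd_pos_of_pos_left _ (by omega)
  have hgp1 : Nat.gcd p1 p2 ≤ p1 := Nat.gcd_le_left _ (by omega)
  have hgp2 : Nat.gcd p1 p2 ≤ p2 := Nat.gcd_le_right _ (by omega)
  have hd1 : Nat.gcd p1 p2 ∣ p1 := Nat.gcd_dvd_left _ _
  have hd2 : Nat.gcd p1 p2 ∣ p2 := Nat.gcd_dvd_right _ _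
  have o1 : ∀ i, i + p1 < 3*τ-2 → f (1+i) = f (1+i+p1) := by
    intro i hi
    have := w1 (i+1) (by omega)
    rw [show i+1 = 1+i by omega, show 1+i+p1 = i+1+p1 by omega] at *
    exact this
  have o2 : ∀ i, i + p2 < 3*τ-2 → f (1+i) = f (1+i+p2) :=
    fun i hi => w2 i (by omega)
  have og : ∀ i, i + Nat.gcd p1 p2 < 3*τ-2 → f (1+i) = f (1+i+Nat.gcd p1 p2) := by
    have hmain := fw (p1+p2) p1 p2 (fun i => f (1+i)) (3*τ-2) le_rfl (by omega) (by omega)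
      (by omega)
      (fun i hi => by
        show f (1+i) = f (1+(i+p1))
        rw [show 1+(i+p1) = 1+i+p1 by omega]; exact o1 i hi)
      (fun i hi => by
        show f (1+i) = f (1+(i+p2))
        rw [show 1+(i+p2) = 1+i+p2 by omega]; exact o2 i hi)
    intro i hi
    have h : f (1+i) = f (1+(i+Nat.gcd p1 p2)) := hmain i hi
    rw [show 1+(i+Nat.gcd p1 p2) = 1+i+Nat.gcd p1 p2 by omega] at h
    exact h
  have oc : ∀ x, 1 ≤ x → x + Nat.gcd p1 p2 ≤ 3*τ-2 → f x = f (x + Nat.gcd p1 p2) := by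
    intro x hx hxe
    have := og (x-1) (by omega)
    rw [show 1+(x-1) = x by omega] at this
    exact this
  constructor
  · intro i hi
    rcases Nat.eq_zero_or_pos i with rfl | hpos
    · have h1 : f 0 = f p1 := by
        have := w1 0 (by omega)
        simpa using this
      have h2 : f (Nat.gcd p1 p2) = f p1 := by
        apply chain_eq f (Nat.gcd p1 p2) 1 (3*τ-2) oc (Nat.gcd p1 p2) p1
          (by omega) (by omega) (by omega)
        exact mod_sub_zero _ p1 _ (by omega) hd1 dvd_rfl
      simpa using h1.trans h2.symm
    · exact oc i (by omega) (by omega)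
  · intro i hi
    by_cases hc : i + Nat.gcd p1 p2 < 3*τ-2
    · exact og i hc
    · have hig : i + Nat.gcd p1 p2 = 3*τ-2 := by omega
      have h1 : f (1+(3*τ-2-p2)) = f (1+(3*τ-2)) := by
        have := w2 (3*τ-2-p2) (by omega)
        rw [show 1+(3*τ-2-p2)+p2 = 1+(3*τ-2) by omega] at this
        exact this
      have h2 : f (1+(3*τ-2-p2)) = f (1+i) := by
        apply chain_eq f (Nat.gcd p1 p2) 1 (3*τ-2) oc _ _
          (by omega) (by omega) (by omega)
        rw [show 1+i-(1+(3*τ-2-p2)) = p2 - Nat.gcd p1 p2 by omega]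
        exact mod_sub_zero _ p2 _ (by omega) hd2 dvd_rfl
      rw [← h2, h1, show 1+(3*τ-2) = 1+i+Nat.gcd p1 p2 by omega]

lemma per_step (T : List ℕ) (τ k : ℕ) (hτ3 : 3 ≤ τ) (hk : k ∈ R T τ)
    (hk1 : (k+1) ∈ R T τ) : wper T τ (k+1) = wper T τ k := by
  have hτ1 : 1 ≤ τ := by omega
  obtain ⟨hp1, hp3, -⟩ := wper_facts T τ k hτ1 hk
  obtain ⟨hq1, hq3, -⟩ := wper_facts T τ (k+1) hτ1 hk1
  have w1 := wper_idx T τ k hτ1 hk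
  have w2 := wper_idx T τ (k+1) hτ1 hk1
  have w2' : ∀ i, i + wper T τ (k+1) < 3*τ-1 →
      idx T (k+(1+i)) = idx T (k+(1+i)+wper T τ (k+1)) := by
    intro i hi
    have := w2 i hi
    rw [show k+1+i = k+(1+i) by omega] at this
    exact this
  obtain ⟨c1, c2⟩ := per_step_core (fun x => idx T (k+x)) τ (wper T τ k) (wper T τ (k+1)) hτ3
    hp1 hp3 hq1 hq3
    (fun i hi => by
      show idx T (k+i) = idx T (k+(i+wper T τ k))
      rw [show k+(i+wper T τ k) = k+i+wper T τ k by omega]; exact w1 i hi)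
    (fun i hi => by
      show idx T (k+(1+i)) = idx T (k+(1+i+wper T τ (k+1)))
      rw [show k+(1+i+wper T τ (k+1)) = k+(1+i)+wper T τ (k+1) by omega]; exact w2' i hi)
  have wk_g : ∀ i, i + Nat.gcd (wper T τ k) (wper T τ (k+1)) < 3*τ-1 →
      idx T (k+i) = idx T (k+i+Nat.gcd (wper T τ k) (wper T τ (k+1))) := by
    intro i hi
    have h : idx T (k+i) = idx T (k+(i+Nat.gcd (wper T τ k) (wper T τ (k+1)))) := c1 i hi
    rw [show k+(i+Nat.gcd (wper T τ k) (wper T τ (k+1)))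
        = k+i+Nat.gcd (wper T τ k) (wper T τ (k+1)) by omega] at h
    exact h
  have wk1_g : ∀ i, i + Nat.gcd (wper T τ k) (wper T τ (k+1)) < 3*τ-1 →
      idx T (k+1+i) = idx T (k+1+i+Nat.gcd (wper T τ k) (wper T τ (k+1))) := by
    intro i hi
    have h : idx T (k+(1+i)) = idx T (k+(1+i+Nat.gcd (wper T τ k) (wper T τ (k+1)))) := c2 i hi
    rw [show k+(1+i+Nat.gcd (wper T τ k) (wper T τ (k+1)))
        = k+(1+i)+Nat.gcd (wper T τ k) (wper T τ (k+1)) by omega,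
      show k+(1+i) = k+1+i by omega] at h
    exact h
  have hg1 : 1 ≤ Nat.gcd (wper T τ k) (wper T τ (k+1)) := Nat.gcd_pos_of_pos_left _ (by omega)
  have hgp1 : Nat.gcd (wper T τ k) (wper T τ (k+1)) ≤ wper T τ k := Nat.gcd_le_left _ (by omega)
  have hgp2 : Nat.gcd (wper T τ k) (wper T τ (k+1)) ≤ wper T τ (k+1) :=
    Nat.gcd_le_right _ (by omega)
  have hle1 : wper T τ k ≤ Nat.gcd (wper T τ k) (wper T τ (k+1)) := wper_le T τ k _
    ((isPeriod_win_iff T τ k _ hτ1 hk.1 hk.2.1).mpr ⟨hg1, by omega, wk_g⟩)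
  have hle2 : wper T τ (k+1) ≤ Nat.gcd (wper T τ k) (wper T τ (k+1)) := wper_le T τ (k+1) _
    ((isPeriod_win_iff T τ (k+1) _ hτ1 hk1.1 hk1.2.1).mpr ⟨hg1, by omega, wk1_g⟩)
  omega

lemma run_facts (T : List ℕ) (τ j' : ℕ) (hτ3 : 3 ≤ τ) (hj' : j' ∈ R T τ) :
    j' + (3 * τ - 1) ≤ rend T τ j' ∧ rend T τ j' ≤ T.length + 1 ∧
      (∀ x, j' ≤ x → x + wper T τ j' < rend T τ j' → idx T x = idx T (x + wper T τ j')) ∧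
      (rend T τ j' ≤ T.length → idx T (rend T τ j') ≠ idx T (rend T τ j' - wper T τ j')) := by
  have hτ1 : 1 ≤ τ := by omega
  have hj1 : 1 ≤ j' := hj'.1
  have hjn : j' + 3 * τ ≤ T.length + 2 := hj'.2.1
  obtain ⟨hp1, hp3, -⟩ := wper_facts T τ j' hτ1 hj'
  have hk0 : (T.length - 3*τ + 3) ∈ {k | j' ≤ k ∧ k ∉ R T τ} := by
    refine ⟨by omega, fun hmem => ?_⟩
    exact absurd hmem.2.1 (by omega)
  have hSne : {k | j' ≤ k ∧ k ∉ R T τ}.Nonempty := ⟨_, hk0⟩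
  obtain ⟨m, hm⟩ : ∃ m, m = sInf {k | j' ≤ k ∧ k ∉ R T τ} := ⟨_, rfl⟩
  have hrend : rend T τ j' = m + 3*τ - 2 := by rw [rend, ← hm]
  obtain ⟨hmS1, hmS2⟩ : j' ≤ m ∧ m ∉ R T τ := by rw [hm]; exact Nat.sInf_mem hSne
  have hm_le : m ≤ T.length - 3*τ + 3 := by rw [hm]; exact Nat.sInf_le hk0
  have hjm : j' + 1 ≤ m := by
    rcases Nat.lt_or_ge j' m with h | h
    · omega
    · have : m = j' := le_antisymm h hmS1
      exact absurd hj' (this ▸ hmS2)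
  have hrun : ∀ k, j' ≤ k → k < m → k ∈ R T τ := by
    intro k h1 h2
    by_contra hnk
    have hmem : k ∈ {k | j' ≤ k ∧ k ∉ R T τ} := ⟨h1, hnk⟩
    have h4 : sInf {k | j' ≤ k ∧ k ∉ R T τ} ≤ k := Nat.sInf_le hmem
    omega
  have hmR' : m - 1 ∈ R T τ := hrun (m-1) (by omega) (by omega)
  have hm_le2 : m - 1 + 3*τ ≤ T.length + 2 := hmR'.2.1
  have hconst : ∀ k, (hk : j' ≤ k) → (k < m → wper T τ k = wper T τ j') := by
    intro k hk
    induction k, hk using Nat.le_induction with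
    | base => intro _; rfl
    | succ k hk ih =>
      intro hkm
      have h1 : k ∈ R T τ := hrun k hk (by omega)
      have h2 : (k+1) ∈ R T τ := hrun (k+1) (by omega) hkm
      rw [per_step T τ k hτ3 h1 h2, ih (by omega)]
  have hglob : ∀ x, j' ≤ x → x + wper T τ j' < m + 3*τ - 2 →
      idx T x = idx T (x + wper T τ j') := by
    intro x hx hxp
    by_cases hxm : x < m
    · have hxR := hrun x hx hxm
      have := wper_idx T τ x hτ1 hxR 0 (by rw [hconst x hx hxm]; omega)
      rw [hconst x hx hxm] at this
      simpa using this
    · have hmR : m - 1 ∈ R T τ := hrun (m-1) (by omega) (by omega)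
      have hq := hconst (m-1) (by omega) (by omega)
      have := wper_idx T τ (m-1) hτ1 hmR (x - (m-1)) (by rw [hq]; omega)
      rw [hq] at this
      rw [show m-1+(x-(m-1)) = x by omega] at this
      exact this
  rw [hrend]
  refine ⟨by omega, by omega, hglob, ?_⟩
  intro hle heq
  apply hmS2
  refine ⟨by omega, by omega, ?_⟩
  have hperiod : IsPeriod (sub T m (m + 3*τ-1)) (wper T τ j') := by
    rw [isPeriod_win_iff T τ m _ hτ1 (by omega) (by omega)]
    refine ⟨hp1, by omega, ?_⟩
    intro i hi
    by_cases hc : m + i + wper T τ j' < m + 3*τ - 2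
    · exact hglob (m+i) (by omega) hc
    · have e : m + i = m + 3*τ-2 - wper T τ j' := by omega
      rw [e, show m+3*τ-2-wper T τ j'+wper T τ j' = m+3*τ-2 by omega]
      exact heq.symm
  have := wper_le T τ m _ hperiod
  show 3 * wper T τ m ≤ τ
  omega

end Aux3
section Aux4

/-- Facts about a member of `R_{s,H}`. -/
lemma mem_bundle (T : List ℕ) (τ k s : ℕ) (H : List ℕ) (hτ3 : 3 ≤ τ)
    (hk : k ∈ R T τ) (hroot : Lroot T τ k = H) (hhead : Lhead T τ k = s) :
    wper T τ k = H.length ∧ s < H.length ∧ 1 ≤ H.length ∧ 3 * H.length ≤ τ ∧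
      sub T (k + s) (k + s + H.length) = H := by
  have hτ1 : 1 ≤ τ := by omega
  have h1 : (Lroot T τ k).length = wper T τ k := lroot_len T τ k hτ1 hk
  rw [hroot] at h1
  obtain ⟨h2, h3⟩ := lroot_head T τ k hτ1 hk
  rw [hhead, hroot] at h3
  rw [hhead] at h2
  obtain ⟨hp1, hp3, -⟩ := wper_facts T τ k hτ1 hk
  rw [← h1] at h3 ⊢
  exact ⟨rfl, by omega, by omega, by omega, h3⟩

/-- The character formula: within its run, a member of `R_{s,H}` reads like `H` rotated by `s`. -/
lemma charform (T : List ℕ) (τ k s : ℕ) (H : List ℕ) (hτ3 : 3 ≤ τ)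
    (hk : k ∈ R T τ) (hroot : Lroot T τ k = H) (hhead : Lhead T τ k = s) :
    ∀ i, k + i < rend T τ k →
      idx T (k + i) = H.getD ((i + H.length - s) % H.length) 0 := by
  have hτ1 : 1 ≤ τ := by omega
  obtain ⟨hwp, hsp, hp1, hp3, hsub⟩ := mem_bundle T τ k s H hτ3 hk hroot hhead
  obtain ⟨hr1, hr2, hglob0, -⟩ := run_facts T τ k hτ3 hk
  rw [hwp] at hglob0
  have hglob : ∀ x, k ≤ x → x + H.length < rend T τ k → idx T x = idx T (x + H.length) := hglob0
  have hk1 : 1 ≤ k := hk.1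
  have hkn : k + 3*τ ≤ T.length + 2 := hk.2.1
  have HgetD : ∀ t, t < H.length → H.getD t 0 = idx T (k + s + t) := by
    intro t ht
    rw [← hsub]
    exact sub_getD T (k+s) H.length t (by omega) (by omega) ht
  have wbase0 := wper_idx T τ k hτ1 hk
  rw [hwp] at wbase0
  have wbase : ∀ i, i + H.length < 3*τ-1 → idx T (k+i) = idx T (k+i+H.length) := wbase0
  intro i
  induction i using Nat.strong_induction_on with
  | _ i IH =>
    intro hi
    by_cases hwin : i < 3*τ-1
    · by_cases his : s ≤ i
      · obtain ⟨q, r, hr, hqr⟩ : ∃ q r, r < H.length ∧ H.length * q + r = i - s :=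
          ⟨(i-s)/H.length, (i-s)%H.length, Nat.mod_lt _ (by omega), Nat.div_add_mod _ _⟩
        have hqp : q * H.length = H.length * q := Nat.mul_comm q H.length
        have hchain := chain_per (fun x => idx T (k+x)) H.length 0 (3*τ-2)
          (fun x hx hxe => by
            show idx T (k+x) = idx T (k+(x+H.length))
            rw [show k+(x+H.length) = k+x+H.length by omega]
            exact wbase x (by omega)) q (s+r) (by omega) (by omega)
        have e : (s+r)+q*H.length = i := by omega
        rw [e] at hchain
        have e2 : (i + H.length - s) % H.length = r := by
          rw [show i + H.length - s = (i-s) + H.length by omega, Nat.add_mod_right, ← hqr,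
            Nat.mul_add_mod]
          exact Nat.mod_eq_of_lt hr
        rw [e2, HgetD r hr, show k+s+r = k+(s+r) by omega]
        exact hchain.symm
      · have h1 : idx T (k+i) = idx T (k+i+H.length) := wbase i (by omega)
        have e2 : (i + H.length - s) % H.length = i + H.length - s :=
          Nat.mod_eq_of_lt (by omega)
        rw [e2, HgetD (i+H.length-s) (by omega), show k+s+(i+H.length-s) = k+i+H.length by omega]
        exact h1
    · have hip : H.length ≤ i := by omega
      have h1 := hglob (k+(i-H.length)) (by omega) (by omega)
      have h2 := IH (i-H.length) (by omega) (by omega)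
      have e3 : ((i-H.length) + H.length - s) % H.length = (i + H.length - s) % H.length := by
        rw [show (i-H.length)+H.length-s = i-s by omega, show i+H.length-s = (i-s)+H.length
          by omega, Nat.add_mod_right]
      rw [← e3, ← h2]
      rw [show k+(i-H.length)+H.length = k+i by omega] at h1
      exact h1.symm

/-- Windows of two members of `R_{s,H}` coincide. -/
lemma win_eq_of_members (T : List ℕ) (τ k1 k2 s : ℕ) (H : List ℕ) (hτ3 : 3 ≤ τ)
    (hk1 : k1 ∈ R T τ) (hroot1 : Lroot T τ k1 = H) (hhead1 : Lhead T τ k1 = s)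
    (hk2 : k2 ∈ R T τ) (hroot2 : Lroot T τ k2 = H) (hhead2 : Lhead T τ k2 = s) :
    sub T k1 (k1 + 3 * τ - 1) = sub T k2 (k2 + 3 * τ - 1) := by
  have hτ1 : 1 ≤ τ := by omega
  have c1 := charform T τ k1 s H hτ3 hk1 hroot1 hhead1
  have c2 := charform T τ k2 s H hτ3 hk2 hroot2 hhead2
  obtain ⟨hr1, -, -, -⟩ := run_facts T τ k1 hτ3 hk1
  obtain ⟨hr2, -, -, -⟩ := run_facts T τ k2 hτ3 hk2
  apply List.ext_getElem
  · rw [win_len T τ k1 hτ1 hk1.1 hk1.2.1, win_len T τ k2 hτ1 hk2.1 hk2.2.1]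
  · intro i h1 h2
    rw [win_len T τ k1 hτ1 hk1.1 hk1.2.1] at h1
    rw [← List.getD_eq_getElem _ 0, ← List.getD_eq_getElem _ 0,
      win_getD T τ k1 i hτ1 hk1.1 hk1.2.1 h1, win_getD T τ k2 i hτ1 hk2.1 hk2.2.1 h1,
      c1 i (by omega), c2 i (by omega)]

/-- A position whose window agrees with that of a member of `R_{s,H}` is itself in `R_{s,H}`. -/
lemma mem_of_window_eq (T : List ℕ) (τ k1 k2 s : ℕ) (H : List ℕ) (hτ3 : 3 ≤ τ)
    (hk1 : k1 ∈ R T τ) (hroot1 : Lroot T τ k1 = H) (hhead1 : Lhead T τ k1 = s)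
    (h21 : 1 ≤ k2) (h2n : k2 + 3 * τ ≤ T.length + 2)
    (hwin : sub T k2 (k2 + 3 * τ - 1) = sub T k1 (k1 + 3 * τ - 1)) :
    k2 ∈ R T τ ∧ Lroot T τ k2 = H ∧ Lhead T τ k2 = s := by
  have hτ1 : 1 ≤ τ := by omega
  obtain ⟨hwp1, hsp, hp1, hp3, -⟩ := mem_bundle T τ k1 s H hτ3 hk1 hroot1 hhead1
  have hper_eq : per (sub T k2 (k2 + 3*τ - 1)) = per (sub T k1 (k1 + 3*τ - 1)) :=
    congrArg per hwin
  have hwper : wper T τ k2 = wper T τ k1 := hper_eq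
  have hk2R : k2 ∈ R T τ := by
    refine ⟨h21, h2n, ?_⟩
    show 3 * wper T τ k2 ≤ τ
    rw [hwper]
    exact hk1.2.2
  have hPdef : per (sub T k1 (k1 + 3*τ - 1)) = H.length := hwp1
  have hsub_eq : ∀ t, t < per (sub T k1 (k1 + 3*τ - 1)) →
      sub T (k2+t) (k2+t+per (sub T k1 (k1 + 3*τ - 1)))
        = sub T (k1+t) (k1+t+per (sub T k1 (k1 + 3*τ - 1))) := by
    intro t ht
    have hb : t + per (sub T k1 (k1 + 3*τ - 1)) ≤ 3*τ-1 := by rw [hPdef] at ht ⊢; omega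
    rw [sub_shift T τ k2 t _ h21 hb, sub_shift T τ k1 t _ hk1.1 hb, hwin]
  have hrooteq : Lroot T τ k2 = Lroot T τ k1 := by
    unfold Lroot
    rw [hper_eq]
    rw [Finset.image_congr (fun t ht => hsub_eq t (by simpa using ht))]
  have hheadeq : Lhead T τ k2 = Lhead T τ k1 := by
    unfold Lhead
    congr 1
    ext t
    simp only [Set.mem_setOf_eq, hper_eq, hrooteq]
    constructor
    · rintro ⟨h1, h2⟩
      exact ⟨h1, by rw [← hsub_eq t h1]; exact h2⟩
    · rintro ⟨h1, h2⟩
      exact ⟨h1, by rw [hsub_eq t h1]; exact h2⟩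
  exact ⟨hk2R, hrooteq.trans hroot1, hheadeq.trans hhead1⟩

end Aux4
section Aux5

lemma typ_cases (T : List ℕ) (τ k : ℕ) : typ T τ k = 1 ∨ typ T τ k = -1 := by
  unfold typ; split
  · left; rfl
  · right; rfl

lemma typ_pos_facts (T : List ℕ) (τ k : ℕ) (h : typ T τ k = 1) :
    rend T τ k ≤ T.length ∧
      idx T (rend T τ k - per (sub T k (k + 3 * τ - 1))) < idx T (rend T τ k) := by
  by_cases hc : rend T τ k ≤ T.length ∧
      idx T (rend T τ k - per (sub T k (k + 3 * τ - 1))) < idx T (rend T τ k)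
  · exact hc
  · rw [typ, if_neg hc] at h; norm_num at h

lemma typ_neg_facts (T : List ℕ) (τ k s : ℕ) (H : List ℕ) (hτ3 : 3 ≤ τ)
    (hk : k ∈ R T τ) (hroot : Lroot T τ k = H) (hhead : Lhead T τ k = s)
    (h : typ T τ k = -1) :
    rend T τ k = T.length + 1 ∨
      (rend T τ k ≤ T.length ∧ idx T (rend T τ k) < idx T (rend T τ k - H.length)) := by
  obtain ⟨hwp, hsp, hp1, hp3, -⟩ := mem_bundle T τ k s H hτ3 hk hroot hhead
  obtain ⟨hr1, hr2, -, hne⟩ := run_facts T τ k hτ3 hk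
  by_cases hc : rend T τ k ≤ T.length ∧
      idx T (rend T τ k - per (sub T k (k + 3 * τ - 1))) < idx T (rend T τ k)
  · rw [typ, if_pos hc] at h; norm_num at h
  · push_neg at hc
    by_cases hcc : rend T τ k ≤ T.length
    · right
      have h5 := hc hcc
      have h6 := hne hcc
      have hPdef : per (sub T k (k + 3 * τ - 1)) = H.length := hwp
      rw [hPdef] at h5
      rw [hwp] at h6
      exact ⟨hcc, lt_of_le_of_ne h5 h6⟩
    · left; omega

lemma hch_shift (p s d : ℕ) (hp : 0 < p) (hsd : s + p ≤ d) :
    (d - p + p - s) % p = (d + p - s) % p := by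
  rw [show d - p + p - s = d - s by omega, show d + p - s = (d - s) + p by omega,
    Nat.add_mod_right]

lemma dev_char (T : List ℕ) (τ k s : ℕ) (H : List ℕ) (hτ3 : 3 ≤ τ)
    (hk : k ∈ R T τ) (hroot : Lroot T τ k = H) (hhead : Lhead T τ k = s) :
    idx T (rend T τ k - H.length)
      = H.getD ((rend T τ k - k + H.length - s) % H.length) 0 := by
  obtain ⟨hwp, hsp, hp1, hp3, -⟩ := mem_bundle T τ k s H hτ3 hk hroot hhead
  obtain ⟨hr1, -, -, -⟩ := run_facts T τ k hτ3 hk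
  have e3 := charform T τ k s H hτ3 hk hroot hhead (rend T τ k - k - H.length) (by omega)
  rw [show k + (rend T τ k - k - H.length) = rend T τ k - H.length by omega] at e3
  rw [e3, hch_shift H.length s (rend T τ k - k) (by omega) (by omega)]

lemma lexp_eq (T : List ℕ) (τ k s : ℕ) (H : List ℕ) (hτ3 : 3 ≤ τ)
    (hk : k ∈ R T τ) (hroot : Lroot T τ k = H) (hhead : Lhead T τ k = s) :
    Lexp T τ k = (rend T τ k - k - s) / H.length := by
  obtain ⟨hwp, -, -, -, -⟩ := mem_bundle T τ k s H hτ3 hk hroot hhead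
  have hPdef : per (sub T k (k + 3 * τ - 1)) = H.length := hwp
  unfold Lexp
  rw [hhead, hPdef]

lemma d_lt_d (T : List ℕ) (τ k1 k2 s : ℕ) (H : List ℕ) (hτ3 : 3 ≤ τ)
    (hk1 : k1 ∈ R T τ) (hroot1 : Lroot T τ k1 = H) (hhead1 : Lhead T τ k1 = s)
    (hk2 : k2 ∈ R T τ) (hroot2 : Lroot T τ k2 = H) (hhead2 : Lhead T τ k2 = s)
    (h : Lexp T τ k1 < Lexp T τ k2) : rend T τ k1 - k1 < rend T τ k2 - k2 := by
  obtain ⟨hwp, hsp, hp1, hp3, -⟩ := mem_bundle T τ k1 s H hτ3 hk1 hroot1 hhead1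
  obtain ⟨hr1, -, -, -⟩ := run_facts T τ k1 hτ3 hk1
  obtain ⟨hr2, -, -, -⟩ := run_facts T τ k2 hτ3 hk2
  have e1 := lexp_eq T τ k1 s H hτ3 hk1 hroot1 hhead1
  have e2 := lexp_eq T τ k2 s H hτ3 hk2 hroot2 hhead2
  have hm1 : H.length * ((rend T τ k1 - k1 - s) / H.length) + (rend T τ k1 - k1 - s) % H.length
      = rend T τ k1 - k1 - s := Nat.div_add_mod _ _
  have hm2 : H.length * ((rend T τ k2 - k2 - s) / H.length) + (rend T τ k2 - k2 - s) % H.length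
      = rend T τ k2 - k2 - s := Nat.div_add_mod _ _
  rw [← e1] at hm1
  rw [← e2] at hm2
  have hmod1 : (rend T τ k1 - k1 - s) % H.length < H.length := Nat.mod_lt _ (by omega)
  have hmul : H.length * (Lexp T τ k1 + 1) ≤ H.length * Lexp T τ k2 :=
    Nat.mul_le_mul_left _ (by omega)
  rw [Nat.mul_add, Nat.mul_one] at hmul
  omega

/-- The key comparison lemma. -/
lemma cmp_lt (T : List ℕ) (τ k1 k2 s : ℕ) (H : List ℕ) (hτ3 : 3 ≤ τ)
    (hk1 : k1 ∈ R T τ) (hroot1 : Lroot T τ k1 = H) (hhead1 : Lhead T τ k1 = s)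
    (hk2 : k2 ∈ R T τ) (hroot2 : Lroot T τ k2 = H) (hhead2 : Lhead T τ k2 = s)
    (htyp1 : typ T τ k1 = -1)
    (hor : rend T τ k1 - k1 < rend T τ k2 - k2 ∨
      (typ T τ k2 = 1 ∧ rend T τ k2 - k2 ≤ rend T τ k1 - k1)) :
    suf T k1 < suf T k2 := by
  have hτ1 : 1 ≤ τ := by omega
  obtain ⟨hwp1, hsp, hp1, hp3, -⟩ := mem_bundle T τ k1 s H hτ3 hk1 hroot1 hhead1
  obtain ⟨hwp2, -, -, -, -⟩ := mem_bundle T τ k2 s H hτ3 hk2 hroot2 hhead2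
  obtain ⟨hr11, hr12, -, -⟩ := run_facts T τ k1 hτ3 hk1
  obtain ⟨hr21, hr22, -, -⟩ := run_facts T τ k2 hτ3 hk2
  have c1 := charform T τ k1 s H hτ3 hk1 hroot1 hhead1
  have c2 := charform T τ k2 s H hτ3 hk2 hroot2 hhead2
  have hk11 : 1 ≤ k1 := hk1.1
  have hk21 : 1 ≤ k2 := hk2.1
  have hk1n : k1 + 3*τ ≤ T.length + 2 := hk1.2.1
  have hk2n : k2 + 3*τ ≤ T.length + 2 := hk2.2.1
  have hlen1 : (suf T k1).length = T.length + 1 - k1 := suf_len T k1 hk11 (by omega)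
  have hlen2 : (suf T k2).length = T.length + 1 - k2 := suf_len T k2 hk21 (by omega)
  have common : ∀ i, i < rend T τ k1 - k1 → i < rend T τ k2 - k2 →
      (suf T k1).getD i 0 = (suf T k2).getD i 0 := by
    intro i hi1 hi2
    rw [suf_getD T k1 i hk11, suf_getD T k2 i hk21, c1 i (by omega), c2 i (by omega)]
  have hdev1 := dev_char T τ k1 s H hτ3 hk1 hroot1 hhead1
  have hdev2 := dev_char T τ k2 s H hτ3 hk2 hroot2 hhead2
  rcases hor with hd | ⟨htyp2, hd⟩
  · rcases typ_neg_facts T τ k1 s H hτ3 hk1 hroot1 hhead1 htyp1 with hend | ⟨hle, hlt⟩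
    · apply lex_lt_of_prefix
      · rw [hlen1, hlen2]; omega
      · intro i hi; rw [hlen1] at hi; exact common i (by omega) (by omega)
    · apply lex_lt_of_point (rend T τ k1 - k1)
      · intro i hi; exact common i hi (by omega)
      · rw [hlen1]; omega
      · rw [hlen2]; omega
      · rw [suf_getD T k1 _ hk11, suf_getD T k2 _ hk21,
          show k1 + (rend T τ k1 - k1) = rend T τ k1 by omega,
          c2 (rend T τ k1 - k1) (by omega), ← hdev1]
        exact hlt
  · obtain ⟨h2le, h2lt⟩ := typ_pos_facts T τ k2 htyp2
    have hPdef2 : per (sub T k2 (k2 + 3 * τ - 1)) = H.length := hwp2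
    rw [hPdef2] at h2lt
    rcases lt_or_eq_of_le hd with hdlt | hdeq
    · apply lex_lt_of_point (rend T τ k2 - k2)
      · intro i hi; exact common i (by omega) (by omega)
      · rw [hlen1]; omega
      · rw [hlen2]; omega
      · rw [suf_getD T k1 _ hk11, suf_getD T k2 _ hk21,
          show k2 + (rend T τ k2 - k2) = rend T τ k2 by omega,
          c1 (rend T τ k2 - k2) (by omega), ← hdev2]
        exact h2lt
    · rcases typ_neg_facts T τ k1 s H hτ3 hk1 hroot1 hhead1 htyp1 with hend | ⟨hle, hlt⟩
      · apply lex_lt_of_prefix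
        · rw [hlen1, hlen2]; omega
        · intro i hi; rw [hlen1] at hi; exact common i (by omega) (by omega)
      · apply lex_lt_of_point (rend T τ k1 - k1)
        · intro i hi; exact common i hi (by omega)
        · rw [hlen1]; omega
        · rw [hlen2]; omega
        · rw [suf_getD T k1 _ hk11, suf_getD T k2 _ hk21,
            show k1 + (rend T τ k1 - k1) = rend T τ k1 by omega,
            show k2 + (rend T τ k1 - k1) = rend T τ k2 by omega]
          calc idx T (rend T τ k1) < idx T (rend T τ k1 - H.length) := hlt
            _ = H.getD ((rend T τ k1 - k1 + H.length - s) % H.length) 0 := hdev1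
            _ = H.getD ((rend T τ k2 - k2 + H.length - s) % H.length) 0 := by rw [hdeq]
            _ = idx T (rend T τ k2 - H.length) := hdev2.symm
            _ < idx T (rend T τ k2) := h2lt
  done

end Aux5
section Aux6

lemma lce_iff (T : List ℕ) (τ j s : ℕ) (H : List ℕ) (hτ3 : 3 ≤ τ)
    (hj : j ∈ R T τ) (hroot : Lroot T τ j = H) (hhead : Lhead T τ j = s) :
    ∀ j', 1 ≤ j' → j' ≤ T.length →
      (3 * τ - 1 ≤ LCE T j j' ↔ (j' ∈ R T τ ∧ Lroot T τ j' = H ∧ Lhead T τ j' = s)) := by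
  have hτ1 : 1 ≤ τ := by omega
  intro j' h1 h2
  have hj1 : 1 ≤ j := hj.1
  have hjn : j + 3*τ ≤ T.length + 2 := hj.2.1
  have hlenj : (suf T j).length = T.length + 1 - j := suf_len T j hj1 (by omega)
  have hlenj' : (suf T j').length = T.length + 1 - j' := suf_len T j' h1 (by omega)
  constructor
  · intro hlce
    have hb : 3*τ-1 ≤ (suf T j').length := le_trans hlce (lcp_le_right _ _)
    rw [hlenj'] at hb
    have h2n : j' + 3*τ ≤ T.length + 2 := by omega
    have hpoint := (le_lcp_iff (3*τ-1) (suf T j) (suf T j') (by omega) (by omega)).mp hlce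
    have hwin : sub T j' (j' + 3*τ-1) = sub T j (j + 3*τ-1) := by
      apply List.ext_getElem
      · rw [win_len T τ j' hτ1 h1 h2n, win_len T τ j hτ1 hj1 hjn]
      · intro i hi1 hi2
        rw [win_len T τ j' hτ1 h1 h2n] at hi1
        rw [← List.getD_eq_getElem _ 0, ← List.getD_eq_getElem _ 0,
          win_getD T τ j' i hτ1 h1 h2n hi1, win_getD T τ j i hτ1 hj1 hjn hi1]
        have := hpoint i hi1
        rw [suf_getD T j i hj1, suf_getD T j' i h1] at this
        exact this.symm
    exact mem_of_window_eq T τ j j' s H hτ3 hj hroot hhead h1 h2n hwin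
  · rintro ⟨hk2, hr2, hh2⟩
    have hwin := win_eq_of_members T τ j j' s H hτ3 hj hroot hhead hk2 hr2 hh2
    show 3*τ-1 ≤ lcp (suf T j) (suf T j')
    rw [le_lcp_iff (3*τ-1) _ _ (by rw [hlenj]; omega)
      (by rw [hlenj']; have := hk2.2.1; omega)]
    intro i hi
    rw [suf_getD T j i hj1, suf_getD T j' i h1]
    have e1 := win_getD T τ j i hτ1 hj1 hjn hi
    have e2 := win_getD T τ j' i hτ1 h1 hk2.2.1 hi
    rw [← e1, ← e2, hwin]

end Aux6
/-- Lemma: `δ(j) = δᵃ(j) − δˢ(j)` for `j ∈ R⁻`. -/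
theorem statement_5
    (σ n τ : ℕ) (T : List ℕ)
    (hσ : 2 ≤ σ) (hn : 2 ≤ n) (hτ : 1 ≤ τ)
    (hlen : T.length = n) (halph : ∀ c ∈ T, c < σ)
    (hlast : idx T n = 0) (huniq : ∀ i, 1 ≤ i → i < n → idx T i ≠ 0)
    (j : ℕ) (hj : j ∈ Rminus T τ)
    (s : ℕ) (hs : s = Lhead T τ j) (H : List ℕ) (hH : H = Lroot T τ j)
    (δ δa δs : ℕ)
    (hδ : δ = Set.ncard {j' | 1 ≤ j' ∧ j' ≤ n ∧ 3 * τ - 1 ≤ LCE T j j' ∧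
      suf T j' ≤ suf T j})
    (hδa : δa = Set.ncard {j' | j' ∈ RminusSH T τ s H ∧ Lexp T τ j' ≤ Lexp T τ j})
    (hδs : δs = Set.ncard {j' | j' ∈ RminusSH T τ s H ∧ Lexp T τ j' = Lexp T τ j ∧
      suf T j < suf T j'}) :
    (δ : ℤ) = (δa : ℤ) - (δs : ℤ) := by
  classical
  subst hlen
  obtain ⟨hjR, hjtyp⟩ := hj
  have hj1 : 1 ≤ j := hjR.1
  have hjn : j + 3*τ ≤ T.length + 2 := hjR.2.1
  have hτ3 : 3 ≤ τ := by
    obtain ⟨hp1, hp3, -⟩ := wper_facts T τ j hτ hjR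
    omega
  have hroot : Lroot T τ j = H := hH.symm
  have hhead : Lhead T τ j = s := hs.symm
  have hmemiff : ∀ k, k ∈ RminusSH T τ s H ↔
      ((k ∈ R T τ ∧ Lroot T τ k = H ∧ Lhead T τ k = s) ∧ typ T τ k = -1) := by
    intro k
    constructor
    · rintro ⟨⟨hk, ht⟩, ⟨hk2, hr, hh⟩⟩
      exact ⟨⟨hk2, hr, hh⟩, ht⟩
    · rintro ⟨⟨hk, hr, hh⟩, ht⟩
      exact ⟨⟨hk, ht⟩, ⟨hk, hr, hh⟩⟩
  set A := {j' | 1 ≤ j' ∧ j' ≤ T.length ∧ 3*τ-1 ≤ LCE T j j' ∧ suf T j' ≤ suf T j} with hA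
  set B := {j' | j' ∈ RminusSH T τ s H ∧ Lexp T τ j' ≤ Lexp T τ j} with hB
  set C := {j' | j' ∈ RminusSH T τ s H ∧ Lexp T τ j' = Lexp T τ j ∧ suf T j < suf T j'} with hC
  have hCB : C ⊆ B := by
    rintro k ⟨hk1, hk2, hk3⟩
    exact ⟨hk1, le_of_eq hk2⟩
  have hBfin : B.Finite := by
    apply (Set.finite_Iic T.length).subset
    rintro k ⟨hk1, -⟩
    have := ((hmemiff k).mp hk1).1.1.2.1
    simp only [Set.mem_Iic]
    omega
  have hAeq : A = B \ C := by
    ext k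
    simp only [hA, hB, hC, Set.mem_setOf_eq, Set.mem_diff]
    constructor
    · rintro ⟨h1, h2, h3, h4⟩
      obtain ⟨hkR, hkroot, hkhead⟩ := (lce_iff T τ j s H hτ3 hjR hroot hhead k h1 h2).mp h3
      have hktyp : typ T τ k = -1 := by
        rcases typ_cases T τ k with htp | htp
        · exfalso
          have hor : rend T τ j - j < rend T τ k - k ∨
              (typ T τ k = 1 ∧ rend T τ k - k ≤ rend T τ j - j) := by
            rcases Nat.lt_or_ge (rend T τ j - j) (rend T τ k - k) with hh | hh
            · exact Or.inl hh
            · exact Or.inr ⟨htp, hh⟩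
          exact absurd (cmp_lt T τ j k s H hτ3 hjR hroot hhead hkR hkroot hkhead hjtyp hor)
            (not_lt.mpr h4)
        · exact htp
      have hexp : Lexp T τ k ≤ Lexp T τ j := by
        by_contra hgt
        have hdd := d_lt_d T τ j k s H hτ3 hjR hroot hhead hkR hkroot hkhead (by omega)
        exact absurd (cmp_lt T τ j k s H hτ3 hjR hroot hhead hkR hkroot hkhead hjtyp
          (Or.inl hdd)) (not_lt.mpr h4)
      refine ⟨⟨(hmemiff k).mpr ⟨⟨hkR, hkroot, hkhead⟩, hktyp⟩, hexp⟩, ?_⟩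
      rintro ⟨-, -, hlt⟩
      exact absurd hlt (not_lt.mpr h4)
    · rintro ⟨⟨hmem, hexp⟩, hnc⟩
      obtain ⟨⟨hkR, hkroot, hkhead⟩, hktyp⟩ := (hmemiff k).mp hmem
      have h1 : 1 ≤ k := hkR.1
      have h2 : k ≤ T.length := by have := hkR.2.1; omega
      refine ⟨h1, h2, (lce_iff T τ j s H hτ3 hjR hroot hhead k h1 h2).mpr
        ⟨hkR, hkroot, hkhead⟩, ?_⟩
      rcases lt_or_eq_of_le hexp with hlt | heq
      · have hdd := d_lt_d T τ k j s H hτ3 hkR hkroot hkhead hjR hroot hhead hlt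
        exact le_of_lt (cmp_lt T τ k j s H hτ3 hkR hkroot hkhead hjR hroot hhead hktyp
          (Or.inl hdd))
      · have hnot : ¬ suf T j < suf T k := fun hcon => hnc ⟨hmem, heq, hcon⟩
        exact le_of_not_gt hnot
  have hCfin : C.Finite := hBfin.subset hCB
  have hdiff : (B \ C).ncard = B.ncard - C.ncard := Set.ncard_diff hCB hCfin
  have hle : C.ncard ≤ B.ncard := Set.ncard_le_ncard hCB hBfin
  -- note: ncard_le_ncard needs t finite
  rw [hδ, hδa, hδs, hAeq, hdiff, Nat.cast_sub hle]
end CSA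
end

section
/- Let j ∈ [1..n−3τ+2] with j ∉ R, and let X ∈ D be a prefix of T[j..n]. Denote δ_text = |X| − 2τ, b_X = RangeBeg(X,T), and δ(j) = |{j′ ∈ [1..n] : LCE(j,j′) ≥ |X| and T[j′..n] ⪯ T[j..n]}|. Then: (1) ISA[j] = b_X + δ(j); and (2) if y ∈ [1..n′] is such that s^lex_y = j + δ_text, then δ(j) = |{i ∈ [1..y] : the reverse of X is a prefix of W[i]}|. -/
open scoped Classical

namespace CSA

/- ## Lex order lemmas -/

lemma cons_lt_cons_iff' {a b : ℕ} {A B : List ℕ} :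
    (a :: A) < (b :: B) ↔ a < b ∨ (a = b ∧ A < B) := by
  constructor
  · intro h
    cases h with
    | rel h => exact Or.inl h
    | cons h => exact Or.inr ⟨rfl, h⟩
  · rintro (h | ⟨rfl, h⟩)
    · exact List.Lex.rel h
    · exact List.Lex.cons h

lemma cons_le_cons_iff' {a b : ℕ} {A B : List ℕ} :
    (a :: A) ≤ (b :: B) ↔ a < b ∨ (a = b ∧ A ≤ B) := by
  rw [← not_lt, cons_lt_cons_iff']
  push_neg
  constructor
  · rintro ⟨h1, h2⟩
    rcases eq_or_lt_of_le h1 with h | h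
    · exact Or.inr ⟨h, h2 h.symm⟩
    · exact Or.inl h
  · rintro (h | ⟨rfl, h⟩)
    · exact ⟨h.le, fun he => by omega⟩
    · exact ⟨le_refl a, fun _ => h⟩

lemma nil_le' (A : List ℕ) : ([] : List ℕ) ≤ A := not_lt.1 (fun h => by cases h)

lemma append_lt_append_iff' (P A B : List ℕ) : P ++ A < P ++ B ↔ A < B := by
  induction P with
  | nil => simp
  | cons p P ih => simpa [cons_lt_cons_iff', lt_irrefl] using ih

lemma append_le_append_iff' (P A B : List ℕ) : P ++ A ≤ P ++ B ↔ A ≤ B := by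
  rw [← not_lt, ← not_lt (a := B), append_lt_append_iff']

lemma le_of_prefix' {A B : List ℕ} (h : A <+: B) : A ≤ B := by
  obtain ⟨t, rfl⟩ := h
  calc A = A ++ [] := by simp
  _ ≤ A ++ t := (append_le_append_iff' _ _ _).2 (not_lt.1 (fun h => by cases h))

lemma prefix_sandwich {A B C : List ℕ} (hAC : A <+: C) (hAB : A ≤ B) (hBC : B ≤ C) :
    A <+: B := by
  induction A generalizing B C with
  | nil => exact List.nil_prefix
  | cons a A ih =>
    cases C with
    | nil => simp at hAC
    | cons c C =>
      obtain ⟨rfl, hAC'⟩ := List.cons_prefix_cons.1 hAC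
      cases B with
      | nil => exact absurd (List.Lex.nil) (not_lt.2 hAB)
      | cons b B =>
        rcases cons_le_cons_iff'.1 hAB with h1 | ⟨h1e, h1⟩ <;>
          rcases cons_le_cons_iff'.1 hBC with h2 | ⟨h2e, h2⟩
        · omega
        · omega
        · omega
        · exact List.cons_prefix_cons.2 ⟨h1e, ih hAC' h1 h2⟩

/- ## lcp lemmas -/

lemma lcp_nil_left (B : List ℕ) : lcp [] B = 0 := by simp [lcp]
lemma lcp_nil_right (A : List ℕ) : lcp A [] = 0 := by simp [lcp]

lemma lcp_cons (a b : ℕ) (A B : List ℕ) :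
    lcp (a :: A) (b :: B) = if a = b then lcp A B + 1 else 0 := by
  simp only [lcp, List.zip_cons_cons, List.takeWhile_cons]
  by_cases h : a = b <;> simp [h]

lemma le_lcp_of_prefix {X A B : List ℕ} (hA : X <+: A) (hB : X <+: B) :
    X.length ≤ lcp A B := by
  induction X generalizing A B with
  | nil => simp
  | cons x X ih =>
    cases A with
    | nil => simp at hA
    | cons a A =>
      cases B with
      | nil => simp at hB
      | cons b B =>
        obtain ⟨rfl, hA'⟩ := List.cons_prefix_cons.1 hA
        obtain ⟨rfl, hB'⟩ := List.cons_prefix_cons.1 hB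
        simp only [lcp_cons, if_pos rfl, List.length_cons]
        exact Nat.succ_le_succ (ih hA' hB')

lemma take_eq_take_of_le_lcp {A B : List ℕ} : ∀ {k : ℕ}, k ≤ lcp A B →
    A.take k = B.take k := by
  induction A generalizing B with
  | nil => intro k hk; cases B <;> simp [lcp] at hk <;> simp [hk]
  | cons a A ih =>
    intro k hk
    cases B with
    | nil => simp [lcp] at hk; simp [hk]
    | cons b B =>
      rw [lcp_cons] at hk
      by_cases h : a = b
      · subst h
        rw [if_pos rfl] at hk
        cases k with
        | zero => simp
        | succ k => simp [List.take_succ_cons, ih (Nat.succ_le_succ_iff.1 hk)]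
      · rw [if_neg h] at hk
        interval_cases k
        simp

lemma prefix_of_prefix_of_le_lcp {X A B : List ℕ} (hA : X <+: A)
    (h : X.length ≤ lcp A B) : X <+: B := by
  rw [List.prefix_iff_eq_take] at hA ⊢
  rw [hA, ← take_eq_take_of_le_lcp h] at *
  rw [hA]; simp [List.take_take]

/- ## sub / suf lemmas -/

lemma sub_eq_take_suf (T : List ℕ) (a L : ℕ) : sub T a (a + L) = (suf T a).take L := by
  simp [sub, suf]

lemma prefix_iff_sub (T X : List ℕ) (a : ℕ) :
    X <+: suf T a ↔ sub T a (a + X.length) = X := by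
  rw [List.prefix_iff_eq_take, sub_eq_take_suf]; exact eq_comm

lemma length_sub_of_le (T : List ℕ) (a L : ℕ) (ha : 1 ≤ a) (h : a + L ≤ T.length + 1) :
    (sub T a (a + L)).length = L := by
  simp [sub]; omega

lemma sub_shift_s7 (T X : List ℕ) (a k m L : ℕ) (ha : 1 ≤ a) (hkm : k + m ≤ L)
    (h : sub T a (a + L) = X) :
    sub T (a + k) (a + k + m) = (X.drop k).take m := by
  subst h
  simp only [sub]
  have h1 : a + k - 1 = (a - 1) + k := by omega
  have h2 : a + k + m - (a + k) = m := by omega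
  have h3 : a + L - a = L := by omega
  rw [h1, h2, h3, List.drop_take, ← List.drop_drop, List.take_take]
  congr 1
  omega

lemma suf_decomp (T : List ℕ) (a d : ℕ) (ha : 1 ≤ a) :
    suf T a = sub T a (a + d) ++ suf T (a + d) := by
  simp only [sub, suf]
  have h1 : a + d - a = d := by omega
  have h2 : a + d - 1 = (a - 1) + d := by omega
  rw [h1, h2, ← List.drop_drop, List.take_append_drop]

lemma suf_inj (T : List ℕ) (a b : ℕ) (ha1 : 1 ≤ a) (ha2 : a ≤ T.length)
    (hb1 : 1 ≤ b) (hb2 : b ≤ T.length) (h : suf T a = suf T b) : a = b := by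
  have := congrArg List.length h
  simp [suf] at this
  omega

lemma sub_eq_iff_pointwise (T X : List ℕ) (a : ℕ) (ha : 1 ≤ a)
    (hb : a - 1 + X.length ≤ T.length) :
    sub T a (a + X.length) = X ↔ ∀ k < X.length, T.getD (a - 1 + k) 0 = X.getD k 0 := by
  have hlen : (sub T a (a + X.length)).length = X.length := by
    simp [sub]; omega
  constructor
  · intro h k hk
    have hk2 : a - 1 + k < T.length := by omega
    rw [List.getD_eq_getElem T 0 hk2, List.getD_eq_getElem X 0 hk]
    have hk3 : k < (sub T a (a + X.length)).length := by rw [hlen]; exact hk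
    calc T[a - 1 + k] = (sub T a (a + X.length))[k]'hk3 := by
          simp only [sub]; rw [List.getElem_take, List.getElem_drop]
      _ = X[k] := List.getElem_of_eq h hk3
  · intro h
    apply List.ext_getElem hlen
    intro k hk1 hk2
    have := h k hk2
    rw [List.getD_eq_getElem T 0 (by omega), List.getD_eq_getElem X 0 hk2] at this
    simp only [sub] at *
    rw [List.getElem_take, List.getElem_drop]
    exact this


lemma rev_prefix_iff (f : ℤ → ℕ) (N : ℕ) (X : List ℕ) (hXN : X.length ≤ N) :
    (X.reverse <+: (List.map f (do let a ← List.range N; pure ((a : ℤ)))).reverse) ↔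
    ∀ k < X.length, f (((N - X.length + k : ℕ) : ℤ)) = X.getD k 0 := by
  have hcoe : (do let a ← List.range N; pure ((a : ℤ)))
      = (List.range N).map (fun a : ℕ => (a : ℤ)) := by
    show (List.flatMap (fun a : ℕ => [(a : ℤ)]) (List.range N)) = _
    induction List.range N with
    | nil => simp
    | cons a l ih => simp [ih]
  rw [hcoe, List.map_map, List.reverse_prefix, List.suffix_iff_eq_drop]
  set V := (List.range N).map (f ∘ fun a : ℕ => (a : ℤ)) with hV
  have hVl : V.length = N := by
    simp only [hV, List.length_map, List.length_range]
  have hdl : (V.drop (V.length - X.length)).length = X.length := by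
    simp only [List.length_drop, hVl]; omega
  have hptw : ∀ k, k < X.length → ∀ hh : k < (V.drop (V.length - X.length)).length,
      (V.drop (V.length - X.length))[k]'hh = f (((N - X.length + k : ℕ) : ℤ)) := by
    intro k hk hh
    simp only [List.getElem_drop, hV, List.getElem_map, List.getElem_range,
      List.length_map, List.length_range, Function.comp]
  constructor
  · intro h k hk
    have hk2 : k < (V.drop (V.length - X.length)).length := by rw [hdl]; exact hk
    have e := List.getElem_of_eq h hk
    rw [List.getD_eq_getElem X 0 hk]
    exact (e.trans (hptw k hk hk2)).symm
  · intro h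
    apply List.ext_getElem hdl.symm
    intro k hk1 hk2
    have h2 := h k hk1
    rw [List.getD_eq_getElem X 0 hk1] at h2
    rw [hptw k hk1 hk2]
    exact h2.symm

/-- Lemma: ISA query for a nonperiodic position. -/
theorem statement_7
    (σ n τ : ℕ) (T : List ℕ)
    (hσ : 2 ≤ σ) (hn : 2 ≤ n) (hτ : 1 ≤ τ)
    (hlen : T.length = n) (halph : ∀ c ∈ T, c < σ)
    (hlast : idx T n = 0) (huniq : ∀ i, 1 ≤ i → i < n → idx T i ≠ 0)
    (Sync : Set ℕ)
    (hSyncRange : ∀ i ∈ Sync, 1 ≤ i ∧ i + 2 * τ ≤ n + 1)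
    (hCons : ∀ i j : ℕ, 1 ≤ i → i + 2 * τ ≤ n + 1 → 1 ≤ j → j + 2 * τ ≤ n + 1 →
      sub T i (i + 2 * τ) = sub T j (j + 2 * τ) → (i ∈ Sync ↔ j ∈ Sync))
    (hDens : ∀ i : ℕ, 1 ≤ i → i + 3 * τ ≤ n + 2 →
      (Sync ∩ Set.Ico i (i + τ) = ∅ ↔ i ∈ R T τ))
    (n' : ℕ) (hn' : Sync.ncard = n')
    (slex : ℕ → ℕ)
    (hslexMem : ∀ i, 1 ≤ i → i ≤ n' → slex i ∈ Sync)
    (hslexSurj : ∀ x ∈ Sync, ∃ i, 1 ≤ i ∧ i ≤ n' ∧ slex i = x)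
    (hslexSorted : ∀ i i', 1 ≤ i → i < i' → i' ≤ n' → suf T (slex i) < suf T (slex i'))
    (j : ℕ) (hj1 : 1 ≤ j) (hj2 : j + 3 * τ ≤ n + 2) (hjR : j ∉ R T τ)
    (X : List ℕ) (hX : X ∈ Dset T τ Sync) (hXpref : X <+: suf T j)
    (δj : ℕ)
    (hδj : δj = Set.ncard {j' | 1 ≤ j' ∧ j' ≤ n ∧ X.length ≤ LCE T j j' ∧
      suf T j' ≤ suf T j}) :
    ISA T j = RangeBeg X T + δj ∧
    (∀ y, 1 ≤ y → y ≤ n' → slex y = j + (X.length - 2 * τ) →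
      δj = Set.ncard {i | 1 ≤ i ∧ i ≤ y ∧ X.reverse <+: Wstr T τ slex i}) := by
  subst hlen
  -- unpack the witness for X ∈ D
  obtain ⟨i0, hi01, hi02, hi0R, hXdef⟩ := hX
  -- the first synchronizing position after i0
  have hdens := (hDens i0 hi01 hi02).not.2 hi0R
  have hex : ∃ s, s ∈ Sync ∧ i0 ≤ s ∧ s < i0 + τ := by
    rcases Set.eq_empty_or_nonempty (Sync ∩ Set.Ico i0 (i0 + τ)) with h | h
    · exact absurd h hdens
    · obtain ⟨s, hs1, hs2⟩ := h
      exact ⟨s, hs1, hs2.1, hs2.2⟩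
  obtain ⟨s0, hs0S, hs0a, hs0b⟩ := hex
  set q := succS T τ Sync i0 with hqdef
  have hsinf : sInf {m | i0 ≤ m ∧ (m ∈ Sync ∨ m = T.length + 2 - 2 * τ)} = q := rfl
  have hne : ({m | i0 ≤ m ∧ (m ∈ Sync ∨ m = T.length + 2 - 2 * τ)} : Set ℕ).Nonempty :=
    ⟨s0, hs0a, Or.inl hs0S⟩
  have hqmem : i0 ≤ q ∧ (q ∈ Sync ∨ q = T.length + 2 - 2 * τ) := Nat.sInf_mem hne
  have hqle : q ≤ s0 := Nat.sInf_le ⟨hs0a, Or.inl hs0S⟩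
  have hqlt : q < i0 + τ := by omega
  have hqS : q ∈ Sync := by
    rcases hqmem.2 with h | h
    · exact h
    · omega
  have hqrange := hSyncRange q hqS
  have hqmin : ∀ m, i0 ≤ m → m < q → m ∉ Sync := by
    intro m h1 h2 hm
    have := Nat.sInf_le (s := {m | i0 ≤ m ∧ (m ∈ Sync ∨ m = T.length + 2 - 2 * τ)})
      ⟨h1, Or.inl hm⟩
    rw [hsinf] at this
    omega
  have hXlen : X.length = q + 2 * τ - i0 := by
    have h := length_sub_of_le T i0 (q + 2 * τ - i0) hi01 (by omega)
    rw [show i0 + (q + 2 * τ - i0) = q + 2 * τ by omega] at h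
    rw [hXdef]
    exact h
  have hδt2 : X.length = (X.length - 2 * τ) + 2 * τ := by omega
  set δt := X.length - 2 * τ with hδtdef
  have hδtq : i0 + δt = q := by omega
  have hδtτ : δt < τ := by omega
  have hsubi0 : sub T i0 (i0 + X.length) = X := by
    rw [show i0 + X.length = q + 2 * τ by omega, hXdef]
  -- transfer of synchronizing positions along occurrences of X
  have transfer : ∀ a, 1 ≤ a → a + X.length ≤ T.length + 1 →
      sub T a (a + X.length) = X → (a + δt ∈ Sync ∧ ∀ k < δt, a + k ∉ Sync) := by
    intro a ha hale hsub
    have hwin : ∀ k ≤ δt, (a + k ∈ Sync ↔ i0 + k ∈ Sync) := by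
      intro k hk
      have h1 : sub T (a + k) (a + k + 2 * τ) = (X.drop k).take (2 * τ) :=
        sub_shift_s7 T X a k (2 * τ) X.length ha (by omega) hsub
      have h2 : sub T (i0 + k) (i0 + k + 2 * τ) = (X.drop k).take (2 * τ) :=
        sub_shift_s7 T X i0 k (2 * τ) X.length hi01 (by omega) hsubi0
      exact hCons (a + k) (i0 + k) (by omega) (by omega) (by omega) (by omega)
        (h1.trans h2.symm)
    constructor
    · exact (hwin δt le_rfl).2 (by rw [hδtq]; exact hqS)
    · intro k hk hmem
      exact hqmin (i0 + k) (by omega) (by omega) ((hwin k hk.le).1 hmem)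
  -- facts about j
  have hjn : j ≤ T.length := by omega
  have hjpref : sub T j (j + X.length) = X := (prefix_iff_sub T X j).1 hXpref
  have hjlen : j + X.length ≤ T.length + 1 := by
    have := hXpref.length_le
    simp only [suf, List.length_drop] at this
    omega
  obtain ⟨hjS, hjmin⟩ := transfer j hj1 hjlen hjpref
  -- Part 1
  have part1 : ISA T j = RangeBeg X T + δj := by
    have hBfin : ({i | 1 ≤ i ∧ i ≤ T.length ∧ suf T i < X} : Set ℕ).Finite :=
      (Set.finite_Icc 1 T.length).subset (fun x hx => ⟨hx.1, hx.2.1⟩)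
    have hDfin : ({j' | 1 ≤ j' ∧ j' ≤ T.length ∧ X.length ≤ LCE T j j' ∧
        suf T j' ≤ suf T j} : Set ℕ).Finite :=
      (Set.finite_Icc 1 T.length).subset (fun x hx => ⟨hx.1, hx.2.1⟩)
    have hunion : {j' | 1 ≤ j' ∧ j' ≤ T.length ∧ suf T j' ≤ suf T j}
        = {i | 1 ≤ i ∧ i ≤ T.length ∧ suf T i < X}
          ∪ {j' | 1 ≤ j' ∧ j' ≤ T.length ∧ X.length ≤ LCE T j j' ∧
              suf T j' ≤ suf T j} := by
      ext p
      simp only [Set.mem_setOf_eq, Set.mem_union]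
      constructor
      · rintro ⟨hp1, hp2, hp3⟩
        rcases lt_or_ge (suf T p) X with h | h
        · exact Or.inl ⟨hp1, hp2, h⟩
        · refine Or.inr ⟨hp1, hp2, ?_, hp3⟩
          exact le_lcp_of_prefix hXpref (prefix_sandwich hXpref h hp3)
      · rintro (⟨hp1, hp2, hp3⟩ | ⟨hp1, hp2, hp3, hp4⟩)
        · exact ⟨hp1, hp2, le_trans hp3.le (le_of_prefix' hXpref)⟩
        · exact ⟨hp1, hp2, hp4⟩
    have hdisj : Disjoint ({i | 1 ≤ i ∧ i ≤ T.length ∧ suf T i < X} : Set ℕ)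
        {j' | 1 ≤ j' ∧ j' ≤ T.length ∧ X.length ≤ LCE T j j' ∧ suf T j' ≤ suf T j} := by
      rw [Set.disjoint_left]
      rintro p ⟨hp1, hp2, hp3⟩ ⟨_, _, hL, hle⟩
      have hpre : X <+: suf T p := prefix_of_prefix_of_le_lcp hXpref hL
      exact absurd (lt_of_le_of_lt (le_of_prefix' hpre) hp3) (lt_irrefl X)
    rw [ISA, RangeBeg, hδj, hunion, Set.ncard_union_eq hdisj hBfin hDfin]
  refine ⟨part1, ?_⟩
  -- Part 2
  intro y hy1 hy2 hyval
  -- characters of X are determined by T at j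
  have hptwX : ∀ k < X.length, T.getD (j - 1 + k) 0 = X.getD k 0 :=
    (sub_eq_iff_pointwise T X j hj1 (by omega)).1 hjpref
  have hXchar : ∀ k < δt, X.getD k 0 ≠ 0 := by
    intro k hk h0
    have h1 := hptwX k (by omega)
    have h2 := huniq (j + k) (by omega) (by omega)
    rw [idx] at h2
    have : j + k - 1 = j - 1 + k := by omega
    rw [this, h1, h0] at h2
    exact h2 rfl
  -- tinf computations
  have htinf : ∀ m : ℕ, 1 ≤ m → m ≤ T.length → tinf T (m : ℤ) = idx T m := by
    intro m h1 h2
    rw [tinf]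
    have he : ((m : ℤ) - 1).emod (T.length : ℤ) = (m : ℤ) - 1 :=
      Int.emod_eq_of_lt (by omega) (by omega)
    rw [he]
    congr 1
    omega
  have hT1 : 1 ≤ T.length := by omega
  have htinf0 : tinf T 0 = idx T T.length := by
    rw [tinf]
    have he : ((0 : ℤ) - 1).emod (T.length : ℤ) = (T.length : ℤ) - 1 := by
      show ((0 : ℤ) - 1) % (T.length : ℤ) = (T.length : ℤ) - 1
      rw [show (0 : ℤ) - 1 = ((T.length : ℤ) - 1) + (T.length : ℤ) * (-1) by ring,
        Int.add_mul_emod_self_left]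
      exact Int.emod_eq_of_lt (by omega) (by omega)
    rw [he]
    congr 1
    omega
  -- characterization of the Wstr prefix condition
  have hW : ∀ i : ℕ, (X.reverse <+: Wstr T τ slex i ↔
      ∀ k < X.length, tinf T ((slex i : ℤ) - (δt : ℤ) + (k : ℤ)) = X.getD k 0) := by
    intro i
    rw [Wstr]
    rw [rev_prefix_iff _ _ _ (show X.length ≤ 3 * τ by omega)]
    constructor <;> intro h k hk <;> have h2 := h k hk
    · rw [← h2]
      congr 1
      omega
    · rw [← h2]
      congr 1
      omega
  -- a synchronizing position matching X cannot be too close to the start of T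
  have hwrap : ∀ i, 1 ≤ i → i ≤ n' → X.reverse <+: Wstr T τ slex i →
      δt + 1 ≤ slex i := by
    intro i h1 h2 hpre
    by_contra hcon
    push_neg at hcon
    have hsr := hSyncRange _ (hslexMem i h1 h2)
    have hk : δt - slex i < X.length := by omega
    have hval := (hW i).1 hpre (δt - slex i) hk
    have harg : (slex i : ℤ) - (δt : ℤ) + ((δt - slex i : ℕ) : ℤ) = 0 := by omega
    rw [harg, htinf0, hlast] at hval
    exact hXchar (δt - slex i) (by omega) hval.symm
  -- the main characterization when slex i ≥ δt + 1
  have hWchar : ∀ i, δt + 1 ≤ slex i → slex i + 2 * τ ≤ T.length + 1 →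
      (X.reverse <+: Wstr T τ slex i ↔
        sub T (slex i - δt) (slex i - δt + X.length) = X) := by
    intro i hs1 hs2
    rw [hW i, sub_eq_iff_pointwise T X (slex i - δt) (by omega) (by omega)]
    have key : ∀ k < X.length,
        tinf T ((slex i : ℤ) - (δt : ℤ) + (k : ℤ)) = T.getD (slex i - δt - 1 + k) 0 := by
      intro k hk
      have harg : (slex i : ℤ) - (δt : ℤ) + (k : ℤ) = ((slex i - δt + k : ℕ) : ℤ) := by
        omega
      rw [harg, htinf (slex i - δt + k) (by omega) (by omega), idx]
      congr 1
      omega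
    constructor
    · intro h k hk
      rw [← key k hk]
      exact h k hk
    · intro h k hk
      rw [key k hk]
      exact h k hk
  -- comparison transfer
  have hcmp : ∀ a, 1 ≤ a → a + X.length ≤ T.length + 1 → sub T a (a + X.length) = X →
      (suf T a ≤ suf T j ↔ suf T (a + δt) ≤ suf T (j + δt)) := by
    intro a ha hle hsub
    have h1 : suf T a = sub T a (a + δt) ++ suf T (a + δt) := suf_decomp T a δt ha
    have h2 : suf T j = sub T j (j + δt) ++ suf T (j + δt) := suf_decomp T j δt hj1
    have e1 : sub T a (a + δt) = X.take δt := by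
      have := sub_shift_s7 T X a 0 δt X.length ha (by omega) hsub
      simpa using this
    have e2 : sub T j (j + δt) = X.take δt := by
      have := sub_shift_s7 T X j 0 δt X.length hj1 (by omega) hjpref
      simpa using this
    rw [h1, h2, e1, e2, append_le_append_iff']
  -- index order reflects suffix order
  have hidx_le : ∀ i i', 1 ≤ i → i ≤ n' → 1 ≤ i' → i' ≤ n' →
      suf T (slex i) ≤ suf T (slex i') → i ≤ i' := by
    intro i i' h1 h2 h1' h2' hle
    by_contra hcon
    push_neg at hcon
    exact absurd (lt_of_le_of_lt hle (hslexSorted i' i h1' hcon h2)) (lt_irrefl _)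
  -- image description of the counted set
  set g : ℕ → ℕ := fun i => slex i - δt with hg
  have himg : {j' | 1 ≤ j' ∧ j' ≤ T.length ∧ X.length ≤ LCE T j j' ∧
      suf T j' ≤ suf T j}
      = g '' {i | 1 ≤ i ∧ i ≤ y ∧ X.reverse <+: Wstr T τ slex i} := by
    ext p
    simp only [Set.mem_setOf_eq, Set.mem_image]
    constructor
    · rintro ⟨hp1, hp2, hpL, hple⟩
      have hppre : X <+: suf T p := prefix_of_prefix_of_le_lcp hXpref hpL
      have hpsub : sub T p (p + X.length) = X := (prefix_iff_sub T X p).1 hppre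
      have hplen : p + X.length ≤ T.length + 1 := by
        have := hppre.length_le
        simp only [suf, List.length_drop] at this
        omega
      obtain ⟨hpS, -⟩ := transfer p hp1 hplen hpsub
      obtain ⟨i, hi1, hi2, hieq⟩ := hslexSurj _ hpS
      refine ⟨i, ⟨hi1, ?_, ?_⟩, ?_⟩
      · apply hidx_le i y hi1 hi2 hy1 hy2
        rw [hieq, hyval]
        exact (hcmp p hp1 hplen hpsub).1 hple
      · rw [hWchar i (by omega) (by omega)]
        have : slex i - δt = p := by omega
        rw [this]
        exact hpsub
      · simp only [hg, hieq]
        omega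
    · rintro ⟨i, ⟨hi1, hi2, hipre⟩, rfl⟩
      have hgi : g i = slex i - δt := rfl
      rw [hgi]
      have hin' : i ≤ n' := le_trans hi2 hy2
      have hsS : slex i ∈ Sync := hslexMem i hi1 hin'
      have hsr := hSyncRange _ hsS
      have hsge : δt + 1 ≤ slex i := hwrap i hi1 hin' hipre
      have hpsub : sub T (slex i - δt) (slex i - δt + X.length) = X :=
        (hWchar i hsge (by omega)).1 hipre
      have hp1 : 1 ≤ slex i - δt := by omega
      have hplen : slex i - δt + X.length ≤ T.length + 1 := by omega
      have hppre : X <+: suf T (slex i - δt) := (prefix_iff_sub T X _).2 hpsub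
      refine ⟨hp1, by omega, le_lcp_of_prefix hXpref hppre, ?_⟩
      rw [hcmp (slex i - δt) hp1 hplen hpsub]
      have heq : slex i - δt + δt = slex i := by omega
      rw [heq, ← hyval]
      rcases eq_or_lt_of_le hi2 with h | h
      · rw [h]
      · exact (hslexSorted i y hi1 h hy2).le
  -- injectivity of g on the counted set
  have hinj : Set.InjOn g {i | 1 ≤ i ∧ i ≤ y ∧ X.reverse <+: Wstr T τ slex i} := by
    rintro i ⟨hi1, hi2, hip⟩ i' ⟨hi1', hi2', hip'⟩ he
    have e1 := hwrap i hi1 (hi2.trans hy2) hip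
    have e2 := hwrap i' hi1' (hi2'.trans hy2) hip'
    have hee : slex i = slex i' := by
      simp only [hg] at he
      omega
    by_contra hne
    rcases Nat.lt_or_ge i i' with h | h
    · have := hslexSorted i i' hi1 h (hi2'.trans hy2)
      rw [hee] at this
      exact absurd this (lt_irrefl _)
    · have h' : i' < i := by omega
      have := hslexSorted i' i hi1' h' (hi2.trans hy2)
      rw [hee] at this
      exact absurd this (lt_irrefl _)
  rw [hδj, himg, Set.ncard_image_of_injOn hinj]
end CSA
end
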